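/- The map ι : H(G,K,V*) → H(G,K,V) defined by ι(Φ)(g) := (Φ(g⁻¹))ᵗ is well defined (ι(Φ) satisfies the K-bi-equivariance and finite-support conditions) and is a C-linear bijection satisfying ι(Φ∗Ψ) = ι(Ψ)∗ι(Φ) for all Φ, Ψ ∈ H(G,K,V*); that is, ι is an anti-isomorphism of C-algebras. -/

import Mathlib

open scoped Classical

noncomputable section
namespace Paper

variable {C : Type} [Field C] {G : Type} [Group G]

/-- Hecke algebra H(G,K,V) as a submodule of `G → End V`. -/
def Hecke (K : Subgroup G) {V : Type} [AddCommGroup V] [Module C V]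
    (ρ : Representation C ↥K V) : Submodule C (G → Module.End C V) where
  carrier := {Φ | (∀ (k k' : ↥K) (g : G), Φ (↑k * g * ↑k') = ρ k * Φ g * ρ k') ∧
    ∃ S : Finset G, ∀ g : G, Φ g ≠ 0 → ∃ s ∈ S, ∃ k ∈ K, ∃ k' ∈ K, g = k * s * k'}
  add_mem' := by
    rintro a b ⟨ha1, Sa, ha2⟩ ⟨hb1, Sb, hb2⟩
    refine ⟨fun k k' g => by simp [ha1 k k' g, hb1 k k' g, mul_add, add_mul],
      Sa ∪ Sb, fun g hg => ?_⟩
    by_cases h : a g ≠ 0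
    · obtain ⟨s, hs, hrest⟩ := ha2 g h
      exact ⟨s, Finset.mem_union_left _ hs, hrest⟩
    · push_neg at h
      have hbg : b g ≠ 0 := by
        intro hb0; apply hg; simp only [Pi.add_apply, h, hb0, add_zero]
      obtain ⟨s, hs, hrest⟩ := hb2 g hbg
      exact ⟨s, Finset.mem_union_right _ hs, hrest⟩
  zero_mem' := ⟨fun k k' g => by simp, ∅, fun g hg => absurd rfl hg⟩
  smul_mem' := by
    rintro c a ⟨ha1, Sa, ha2⟩
    refine ⟨fun k k' g => by
      simp only [Pi.smul_apply, ha1 k k' g, mul_smul_comm, smul_mul_assoc],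
      Sa, fun g hg => ?_⟩
    refine ha2 g (fun h0 => hg ?_)
    simp only [Pi.smul_apply, h0, smul_zero]

/-- Convolution product on functions `G → End V`, with respect to `K`. -/
def conv (K : Subgroup G) {V : Type} [AddCommGroup V] [Module C V]
    (Φ Ψ : G → Module.End C V) : G → Module.End C V :=
  fun g => ∑ᶠ q : G ⧸ K, Φ (Quotient.out q) * Ψ ((Quotient.out q)⁻¹ * g)

/-- Transpose of an endomorphism of the dual, as an endomorphism of `V`. -/
def transEnd {V : Type} [AddCommGroup V] [Module C V] [FiniteDimensional C V]
    (u : Module.End C (Module.Dual C V)) : Module.End C V :=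
  (Module.evalEquiv C V).symm.toLinearMap ∘ₗ u.dualMap ∘ₗ (Module.evalEquiv C V).toLinearMap

section Aux

variable {V : Type} [AddCommGroup V] [Module C V] [FiniteDimensional C V]

lemma transEnd_apply (u : Module.End C (Module.Dual C V)) (v : V) (φ : Module.Dual C V) :
    φ (transEnd u v) = u φ v := by
  have h1 : Module.evalEquiv C V (transEnd u v) = u.dualMap (Module.evalEquiv C V v) := by
    simp [transEnd]
  have h2 := congrArg (fun ψ : Module.Dual C (Module.Dual C V) => ψ φ) h1
  simpa [Module.evalEquiv_apply, Module.Dual.eval_apply] using h2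

lemma dual_ext {x y : V} (h : ∀ φ : Module.Dual C V, φ x = φ y) : x = y := by
  have h0 : ∀ φ : Module.Dual C V, φ (x - y) = 0 := fun φ => by simp [map_sub, h φ]
  exact sub_eq_zero.mp ((Module.forall_dual_apply_eq_zero_iff C (x - y)).mp h0)

lemma transEnd_mul (u v : Module.End C (Module.Dual C V)) :
    transEnd (C := C) (V := V) (u * v) = transEnd v * transEnd u := by
  ext x; refine dual_ext (C := C) fun φ => ?_
  simp [transEnd_apply, Module.End.mul_apply]

lemma transEnd_zero : transEnd (0 : Module.End C (Module.Dual C V)) = 0 := by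
  ext x; refine dual_ext (C := C) fun φ => ?_
  simp [transEnd_apply]

lemma transEnd_add (u v : Module.End C (Module.Dual C V)) :
    transEnd (C := C) (V := V) (u + v) = transEnd u + transEnd v := by
  ext x; refine dual_ext (C := C) fun φ => ?_
  simp [transEnd_apply, LinearMap.add_apply]

lemma transEnd_smul (c : C) (u : Module.End C (Module.Dual C V)) :
    transEnd (C := C) (V := V) (c • u) = c • transEnd u := by
  ext x; refine dual_ext (C := C) fun φ => ?_
  simp [transEnd_apply, LinearMap.smul_apply]

lemma transEnd_inj {u v : Module.End C (Module.Dual C V)} (h : transEnd u = transEnd v) :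
    u = v := by
  ext φ x
  rw [← transEnd_apply, ← transEnd_apply, h]

lemma transEnd_dualMap (w : Module.End C V) :
    transEnd (w.dualMap : Module.End C (Module.Dual C V)) = w := by
  ext x; refine dual_ext (C := C) fun φ => ?_
  simp [transEnd_apply, LinearMap.dualMap_apply]

lemma transEnd_rho {K : Subgroup G} (ρ : Representation C ↥K V) (k : ↥K) :
    transEnd (C := C) (V := V) (ρ.dual k) = ρ k⁻¹ := by
  ext x; refine dual_ext (C := C) fun φ => ?_
  simp [transEnd_apply, Representation.dual_apply, Module.Dual.transpose_apply]

lemma dualMap_mul (a b : Module.End C V) :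
    ((a * b : Module.End C V).dualMap : Module.End C (Module.Dual C V))
      = b.dualMap * a.dualMap := by
  ext φ x
  simp [LinearMap.dualMap_apply, Module.End.mul_apply]

end Aux

lemma supp_fin {K : Subgroup G}
    (hA1 : ∀ g : G, ∃ S : Finset G, ∀ x : G,
      (∃ k ∈ K, ∃ k' ∈ K, x = k * g * k') → ∃ s ∈ S, ∃ k ∈ K, x = k * s)
    {W : Type} [AddCommGroup W] [Module C W] {Φ : G → Module.End C W}
    {S : Finset G} (hS : ∀ g : G, Φ g ≠ 0 → ∃ s ∈ S, ∃ k ∈ K, ∃ k' ∈ K, g = k * s * k') :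
    {q : G ⧸ K | Φ (Quotient.out q) ≠ 0}.Finite := by
  choose T hT using hA1
  refine Set.Finite.subset
    (((S.biUnion (fun s => T s⁻¹)).image
      (fun s' => ((s'⁻¹ : G) : G ⧸ K))).finite_toSet) ?_
  intro q hq
  obtain ⟨s, hs, k, hk, k', hk', hout⟩ := hS _ hq
  obtain ⟨s', hs', κ, hκ, he⟩ := hT s⁻¹ (Quotient.out q)⁻¹
    ⟨k'⁻¹, K.inv_mem hk', k⁻¹, K.inv_mem hk, by rw [hout]; group⟩
  simp only [Finset.coe_image, Set.mem_image, Finset.mem_coe, Finset.mem_biUnion]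
  refine ⟨s', ⟨s, hs, hs'⟩, ?_⟩
  rw [← QuotientGroup.out_eq' q]
  refine QuotientGroup.eq.mpr ?_
  have hoq : Quotient.out q = s'⁻¹ * κ⁻¹ := by
    rw [← inv_inv (Quotient.out q), he]; group
  rw [hoq]
  simpa using K.inv_mem hκ

theorem statement5 {V : Type} [AddCommGroup V] [Module C V] [FiniteDimensional C V]
    (K : Subgroup G)
    (hA1 : ∀ g : G, ∃ S : Finset G, ∀ x : G,
      (∃ k ∈ K, ∃ k' ∈ K, x = k * g * k') → ∃ s ∈ S, ∃ k ∈ K, x = k * s)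
    (ρ : Representation C ↥K V) :
    let ι : (G → Module.End C (Module.Dual C V)) → (G → Module.End C V) :=
      fun Φ g => transEnd (Φ g⁻¹)
    -- ι is well defined : it maps H(G,K,V*) into H(G,K,V)
    (∀ Φ ∈ Hecke K ρ.dual, ι Φ ∈ Hecke K ρ) ∧
    -- ι is C-linear
    (∀ Φ Ψ : G → Module.End C (Module.Dual C V), ι (Φ + Ψ) = ι Φ + ι Ψ) ∧
    (∀ (c : C) (Φ : G → Module.End C (Module.Dual C V)), ι (c • Φ) = c • ι Φ) ∧
    -- ι is a bijection from H(G,K,V*) onto H(G,K,V)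
    (∀ Φ ∈ Hecke K ρ.dual, ∀ Ψ ∈ Hecke K ρ.dual, ι Φ = ι Ψ → Φ = Ψ) ∧
    (∀ Ξ ∈ Hecke K ρ, ∃ Φ ∈ Hecke K ρ.dual, ι Φ = Ξ) ∧
    -- ι is anti-multiplicative : ι(Φ∗Ψ) = ι(Ψ)∗ι(Φ)
    (∀ Φ ∈ Hecke K ρ.dual, ∀ Ψ ∈ Hecke K ρ.dual,
      ι (conv K Φ Ψ) = conv K (ι Ψ) (ι Φ)) := by
  intro ι
  refine ⟨?_, ?_, ?_, ?_, ?_, ?_⟩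
  · -- well defined
    rintro Φ ⟨h1, S, h2⟩
    refine ⟨fun k k' g => ?_, S.image (fun s => s⁻¹), fun g hg => ?_⟩
    · show transEnd (Φ ((↑k * g * ↑k')⁻¹)) = ρ k * transEnd (Φ g⁻¹) * ρ k'
      have e1 : ((k : G) * g * (k' : G))⁻¹ = ((k'⁻¹ : ↥K) : G) * g⁻¹ * ((k⁻¹ : ↥K) : G) := by
        simp [mul_inv_rev, mul_assoc]
      rw [e1, h1 k'⁻¹ k⁻¹ g⁻¹, transEnd_mul, transEnd_mul, transEnd_rho, transEnd_rho,
        inv_inv, inv_inv, mul_assoc]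
    · have h0 : Φ g⁻¹ ≠ 0 := by
        intro hz
        exact hg (show transEnd (Φ g⁻¹) = 0 by rw [hz, transEnd_zero])
      obtain ⟨s, hs, k, hk, k', hk', he⟩ := h2 g⁻¹ h0
      refine ⟨s⁻¹, Finset.mem_image_of_mem _ hs, k'⁻¹, K.inv_mem hk', k⁻¹, K.inv_mem hk, ?_⟩
      rw [← inv_inv g, he]; group
  · -- additive
    intro Φ Ψ; funext g
    show transEnd ((Φ + Ψ) g⁻¹) = transEnd (Φ g⁻¹) + transEnd (Ψ g⁻¹)
    rw [Pi.add_apply, transEnd_add]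
  · -- smul
    intro c Φ; funext g
    show transEnd ((c • Φ) g⁻¹) = c • transEnd (Φ g⁻¹)
    rw [Pi.smul_apply, transEnd_smul]
  · -- injective
    intro Φ _ Ψ _ h
    funext g
    have h2 : transEnd (Φ g⁻¹⁻¹) = transEnd (Ψ g⁻¹⁻¹) := congrFun h g⁻¹
    rw [inv_inv] at h2
    exact transEnd_inj h2
  · -- surjective
    rintro Ξ ⟨h1, S, h2⟩
    refine ⟨fun g => ((Ξ g⁻¹).dualMap : Module.End C (Module.Dual C V)),
      ⟨fun k k' g => ?_, S.image (fun s => s⁻¹), fun g hg => ?_⟩, ?_⟩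
    · show (Ξ ((↑k * g * ↑k')⁻¹)).dualMap = ρ.dual k * (Ξ g⁻¹).dualMap * ρ.dual k'
      have e1 : ((k : G) * g * (k' : G))⁻¹ = ((k'⁻¹ : ↥K) : G) * g⁻¹ * ((k⁻¹ : ↥K) : G) := by
        simp [mul_inv_rev, mul_assoc]
      rw [e1, h1 k'⁻¹ k⁻¹ g⁻¹, dualMap_mul, dualMap_mul]
      simp [Representation.dual_apply, LinearMap.dualMap_def, mul_assoc]
    · have h0 : Ξ g⁻¹ ≠ 0 := by
        intro hz
        refine hg (show (Ξ g⁻¹).dualMap = 0 from ?_)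
        rw [hz]; ext φ x; simp
      obtain ⟨s, hs, k, hk, k', hk', he⟩ := h2 g⁻¹ h0
      refine ⟨s⁻¹, Finset.mem_image_of_mem _ hs, k'⁻¹, K.inv_mem hk', k⁻¹, K.inv_mem hk, ?_⟩
      rw [← inv_inv g, he]; group
    · funext g
      show transEnd ((Ξ g⁻¹⁻¹).dualMap) = Ξ g
      rw [inv_inv, transEnd_dualMap]
  · -- anti-multiplicative
    rintro Φ ⟨hΦ1, SΦ, hΦ2⟩ Ψ ⟨hΨ1, SΨ, hΨ2⟩
    funext g
    show transEnd (conv K Φ Ψ g⁻¹) = conv K (ι Ψ) (ι Φ) g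
    have hfin : (Function.support fun q : G ⧸ K =>
        Φ (Quotient.out q) * Ψ ((Quotient.out q)⁻¹ * g⁻¹)).Finite := by
      refine (supp_fin hA1 hΦ2).subset ?_
      intro q hq
      simp only [Function.mem_support] at hq
      simp only [Set.mem_setOf_eq]
      intro h0
      exact hq (by rw [h0, zero_mul])
    have e1 : transEnd (conv K Φ Ψ g⁻¹)
        = ∑ᶠ q : G ⧸ K, transEnd (Φ (Quotient.out q) * Ψ ((Quotient.out q)⁻¹ * g⁻¹)) :=
      (AddMonoidHom.mk' (transEnd (C := C) (V := V)) transEnd_add).map_finsum hfin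
    have e2 : conv K (ι Ψ) (ι Φ) g
        = ∑ᶠ q : G ⧸ K, transEnd (Ψ (Quotient.out q)⁻¹)
            * transEnd (Φ (((Quotient.out q)⁻¹ * g)⁻¹)) := rfl
    rw [e1, e2,
      ← finsum_comp_equiv (MulAction.toPerm g⁻¹ : Equiv.Perm (G ⧸ K))]
    refine finsum_congr fun q => ?_
    simp only [MulAction.toPerm_apply]
    -- relate representatives
    have hmk : (QuotientGroup.mk (g⁻¹ * Quotient.out q) : G ⧸ K) = g⁻¹ • q := by
      simpa [smul_eq_mul] using MulAction.Quotient.mk_smul_out (X := G) (G := G) K g⁻¹ q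
    have hk0 : (g⁻¹ * Quotient.out q)⁻¹ * Quotient.out (g⁻¹ • q) ∈ K :=
      QuotientGroup.eq.mp (hmk.trans (QuotientGroup.out_eq' (g⁻¹ • q)).symm)
    set k : ↥K := ⟨(g⁻¹ * Quotient.out q)⁻¹ * Quotient.out (g⁻¹ • q), hk0⟩ with hkdef
    have hout : Quotient.out (g⁻¹ • q) = g⁻¹ * Quotient.out q * (k : G) := by
      show Quotient.out (g⁻¹ • q)
        = g⁻¹ * Quotient.out q * ((g⁻¹ * Quotient.out q)⁻¹ * Quotient.out (g⁻¹ • q))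
      group
    have hΦeq : Φ (Quotient.out (g⁻¹ • q)) = Φ (g⁻¹ * Quotient.out q) * ρ.dual k := by
      have e3 : Quotient.out (g⁻¹ • q)
          = ((1 : ↥K) : G) * (g⁻¹ * Quotient.out q) * (k : G) := by
        rw [hout]; simp [mul_assoc]
      rw [e3, hΦ1 1 k, map_one, one_mul]
    have hΨeq : (Ψ ((Quotient.out (g⁻¹ • q))⁻¹ * g⁻¹))
        = ρ.dual k⁻¹ * Ψ (Quotient.out q)⁻¹ := by
      have e4 : (Quotient.out (g⁻¹ • q))⁻¹ * g⁻¹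
          = ((k⁻¹ : ↥K) : G) * (Quotient.out q)⁻¹ * ((1 : ↥K) : G) := by
        rw [hout]; simp [mul_inv_rev, mul_assoc]
      rw [e4, hΨ1 k⁻¹ 1, map_one, mul_one]
    rw [hΦeq, hΨeq,
      show ((Quotient.out q)⁻¹ * g)⁻¹ = g⁻¹ * Quotient.out q from by group,
      mul_assoc, ← mul_assoc (ρ.dual k), ← map_mul, mul_inv_cancel, map_one, one_mul,
      transEnd_mul]

end Paper
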